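/- Let S be the gluing of affine semigroups S_1 and S_2 with G(S_1) ∩ G(S_2) = dℤ. Then Betti(S) = Betti(S_1) ∪ Betti(S_2) ∪ {d}. -/

import Mathlib

open Finset

variable {M : Type*} [AddCommMonoid M] {r : ℕ}

/-- The factorization homomorphism associated to the generating tuple `A`. -/
def phi (A : Fin r → M) (u : Fin r → ℕ) : M := ∑ i, u i • A i

/-- One step of the relation `R`: two factorizations of `a` with nonzero dot product. -/
def step (A : Fin r → M) (a : M) (u v : Fin r → ℕ) : Prop :=
  phi A u = a ∧ phi A v = a ∧ (∑ i, u i * v i) ≠ 0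

/-- The relation `R` on the fiber of `a`: connected by a chain of factorizations with
consecutive nonzero dot products. -/
def Rrel (A : Fin r → M) (a : M) : (Fin r → ℕ) → (Fin r → ℕ) → Prop :=
  Relation.ReflTransGen (step A a)

/-- `a` is a Betti element: its fiber has more than one `R`-class. -/
def IsBetti (A : Fin r → M) (a : M) : Prop :=
  ∃ u v : Fin r → ℕ, phi A u = a ∧ phi A v = a ∧ ¬ Rrel A a u v

/-- `a` is Betti-minimal: a Betti element minimal with respect to `b ≺ a ↔ a - b ∈ S`. -/
def BettiMinimal (A : Fin r → M) (a : M) : Prop :=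
  IsBetti A a ∧ ∀ b : M, IsBetti A b → (∃ c : M, a = b + c) → b = a

/-- `a` has a unique presentation: exactly two factorizations, with disjoint support. -/
def HasUniquePres (A : Fin r → M) (a : M) : Prop :=
  ∃ u v : Fin r → ℕ, u ≠ v ∧ {w : Fin r → ℕ | phi A w = a} = {u, v} ∧
    (∑ i, u i * v i) = 0

/-- The monoid generated by `A` is uniquely presented: every Betti element has exactly two
factorizations, with disjoint support. -/
def UniquelyPresented (A : Fin r → M) : Prop :=
  ∀ a : M, IsBetti A a → HasUniquePres A a

set_option linter.unusedSectionVars false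
set_option linter.unusedVariables false

section Basic

variable {A : Fin r → M}

lemma phi_zero (A : Fin r → M) : phi A 0 = 0 := by simp [phi]

lemma phi_add (A : Fin r → M) (u v : Fin r → ℕ) : phi A (u + v) = phi A u + phi A v := by
  simp [phi, add_smul, Finset.sum_add_distrib]

lemma phi_nsmul (A : Fin r → M) (k : ℕ) (u : Fin r → ℕ) : phi A (k • u) = k • phi A u := by
  simp only [phi, Pi.smul_apply, smul_eq_mul, mul_smul, ← Finset.smul_sum]

lemma phi_single (A : Fin r → M) (j : Fin r) : phi A (Pi.single j 1) = A j := by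
  simp only [phi]
  rw [Finset.sum_eq_single j]
  · simp
  · intro i _ hij; simp [Pi.single_eq_of_ne hij]
  · simp

lemma phi_mem_closure (A : Fin r → M) (u : Fin r → ℕ) :
    phi A u ∈ AddSubmonoid.closure (Set.range A) := by
  refine AddSubmonoid.sum_mem _ ?_
  intro i _
  exact nsmul_mem (AddSubmonoid.subset_closure (Set.mem_range_self i)) _

lemma exists_phi_of_mem_closure {x : M} (hx : x ∈ AddSubmonoid.closure (Set.range A)) :
    ∃ u : Fin r → ℕ, phi A u = x := by
  let T : AddSubmonoid M :=
    { carrier := {y | ∃ u : Fin r → ℕ, phi A u = y}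
      zero_mem' := ⟨0, phi_zero A⟩
      add_mem' := by rintro y z ⟨u, rfl⟩ ⟨v, rfl⟩; exact ⟨u + v, phi_add A u v⟩ }
  have : AddSubmonoid.closure (Set.range A) ≤ T := by
    rw [AddSubmonoid.closure_le]
    rintro y ⟨i, rfl⟩
    exact ⟨Pi.single i 1, phi_single A i⟩
  exact this hx

lemma phi_decomp (A : Fin r → M) {u : Fin r → ℕ} {j : Fin r} (hj : u j ≠ 0) :
    phi A u = A j + phi A (u - Pi.single j 1) := by
  have h : Pi.single j 1 + (u - Pi.single j 1) = u := by
    funext i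
    by_cases hij : i = j
    · subst hij; simp only [Pi.add_apply, Pi.sub_apply, Pi.single_eq_same]; omega
    · simp [Pi.single_eq_of_ne hij]
  conv_lhs => rw [← h]
  rw [phi_add, phi_single]

lemma phi_mem_subgroup {N : Type*} [AddCommGroup N] (A : Fin r → N) (u : Fin r → ℕ) :
    phi A u ∈ AddSubgroup.closure (Set.range A) := by
  refine AddSubgroup.sum_mem _ ?_
  intro i _
  exact nsmul_mem (AddSubgroup.subset_closure (Set.mem_range_self i)) _

lemma dot_ne_zero_elim {s₁ : ℕ} {u v : Fin s₁ → ℕ} (h : (∑ i, u i * v i) ≠ 0) :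
    ∃ i, u i ≠ 0 ∧ v i ≠ 0 := by
  by_contra hc
  push_neg at hc
  apply h
  refine Finset.sum_eq_zero fun i _ => ?_
  rcases Nat.eq_zero_or_pos (u i) with h0 | h0
  · simp [h0]
  · simp [hc i (by omega)]

lemma dot_ne_mono {s₁ : ℕ} {u v u' v' : Fin s₁ → ℕ} (h : (∑ i, u i * v i) ≠ 0)
    (hu : u ≤ u') (hv : v ≤ v') : (∑ i, u' i * v' i) ≠ 0 := by
  obtain ⟨i, hui, hvi⟩ := dot_ne_zero_elim h
  have : 0 < ∑ i, u' i * v' i := by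
    refine Finset.sum_pos' (fun j _ => Nat.zero_le _) ⟨i, Finset.mem_univ i, ?_⟩
    have h1 : u i ≤ u' i := hu i
    have h2 : v i ≤ v' i := hv i
    exact Nat.mul_pos (by omega) (by omega)
  omega

lemma self_dot_ne_zero {s₁ : ℕ} {u : Fin s₁ → ℕ} (h : u ≠ 0) : (∑ i, u i * u i) ≠ 0 := by
  have : ∃ i, u i ≠ 0 := by
    by_contra hc; push_neg at hc; exact h (funext fun i => hc i)
  obtain ⟨i, hi⟩ := this
  have : 0 < ∑ i, u i * u i :=
    Finset.sum_pos' (fun j _ => Nat.zero_le _) ⟨i, Finset.mem_univ i, Nat.mul_pos (by omega) (by omega)⟩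
  omega

lemma step_symm {A : Fin r → M} {a : M} {u v : Fin r → ℕ} (h : step A a u v) : step A a v u :=
  ⟨h.2.1, h.1, by rw [Finset.sum_congr rfl fun i _ => mul_comm (v i) (u i)]; exact h.2.2⟩

lemma Rrel.symm' {A : Fin r → M} {a : M} {u v : Fin r → ℕ} (h : Rrel A a u v) : Rrel A a v u :=
  by haveI : Std.Symm (step A a) := ⟨fun _ _ hs => step_symm hs⟩
     exact Std.Symm.symm (r := Relation.ReflTransGen (step A a)) _ _ h

lemma conn_of_not_betti {A : Fin r → M} {a : M} (h : ¬ IsBetti A a) :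
    ∀ x y, phi A x = a → phi A y = a → Rrel A a x y := by
  intro x y hx hy
  by_contra hc
  exact h ⟨x, y, hx, hy, hc⟩

end Basic

section Append

variable {n r₁ r₂ : ℕ}

lemma phi_append (A₁ : Fin r₁ → M) (A₂ : Fin r₂ → M) (u₁ : Fin r₁ → ℕ) (u₂ : Fin r₂ → ℕ) :
    phi (Fin.append A₁ A₂) (Fin.append u₁ u₂) = phi A₁ u₁ + phi A₂ u₂ := by
  simp [phi, Fin.sum_univ_add]

lemma append_decomp {α : Type*} (w : Fin (r₁ + r₂) → α) :
    Fin.append (fun i => w (Fin.castAdd r₂ i)) (fun i => w (Fin.natAdd r₁ i)) = w := by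
  funext i
  refine Fin.addCases (motive := fun i =>
    Fin.append (fun i => w (Fin.castAdd r₂ i)) (fun i => w (Fin.natAdd r₁ i)) i = w i)
    (fun j => ?_) (fun j => ?_) i <;> simp

lemma dot_append (u₁ v₁ : Fin r₁ → ℕ) (u₂ v₂ : Fin r₂ → ℕ) :
    (∑ i, Fin.append u₁ u₂ i * Fin.append v₁ v₂ i)
      = (∑ i, u₁ i * v₁ i) + ∑ i, u₂ i * v₂ i := by
  rw [Fin.sum_univ_add]
  simp

lemma append_eq_append_iff {α : Type*} {u₁ v₁ : Fin r₁ → α} {u₂ v₂ : Fin r₂ → α} :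
    Fin.append u₁ u₂ = Fin.append v₁ v₂ ↔ u₁ = v₁ ∧ u₂ = v₂ := by
  constructor
  · intro h
    constructor
    · funext i
      have := congrFun h (Fin.castAdd r₂ i); simpa using this
    · funext i
      have := congrFun h (Fin.natAdd r₁ i); simpa using this
  · rintro ⟨rfl, rfl⟩; rfl

lemma append_zero_zero {α : Type*} [Zero α] : (Fin.append (0 : Fin r₁ → α) (0 : Fin r₂ → α)) = 0 := by
  funext i
  refine Fin.addCases (motive := fun i => Fin.append (0 : Fin r₁ → α) (0 : Fin r₂ → α) i = 0)
    (fun j => ?_) (fun j => ?_) i <;> simp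

section Families

variable {A₁ : Fin r₁ → M} {A₂ : Fin r₂ → M} {a : M}

lemma lift_left {u₁ v₁ : Fin r₁ → ℕ} (h : Rrel A₁ a u₁ v₁) :
    Rrel (Fin.append A₁ A₂) a (Fin.append u₁ 0) (Fin.append v₁ 0) := by
  induction h with
  | refl => exact Relation.ReflTransGen.refl
  | tail _ hs ih =>
    refine ih.tail ⟨?_, ?_, ?_⟩
    · rw [phi_append, phi_zero, add_zero]; exact hs.1
    · rw [phi_append, phi_zero, add_zero]; exact hs.2.1
    · rw [dot_append]; simpa using hs.2.2

lemma lift_right {u₂ v₂ : Fin r₂ → ℕ} (h : Rrel A₂ a u₂ v₂) :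
    Rrel (Fin.append A₁ A₂) a (Fin.append 0 u₂) (Fin.append 0 v₂) := by
  induction h with
  | refl => exact Relation.ReflTransGen.refl
  | tail _ hs ih =>
    refine ih.tail ⟨?_, ?_, ?_⟩
    · rw [phi_append, phi_zero, zero_add]; exact hs.1
    · rw [phi_append, phi_zero, zero_add]; exact hs.2.1
    · rw [dot_append]; simpa using hs.2.2

end Families

section EquivTransport

variable {r r' : ℕ}

lemma phi_comp (e : Fin r' ≃ Fin r) (B : Fin r → M) (u : Fin r → ℕ) :
    phi (B ∘ e) (u ∘ e) = phi B u := by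
  simp only [phi, Function.comp_apply]
  exact Fintype.sum_equiv e _ _ (fun i => rfl)

lemma dot_comp (e : Fin r' ≃ Fin r) (u v : Fin r → ℕ) :
    (∑ i, (u ∘ e) i * (v ∘ e) i) = ∑ i, u i * v i :=
  Fintype.sum_equiv e _ _ (fun i => rfl)

lemma rrel_comp (e : Fin r' ≃ Fin r) {B : Fin r → M} {a : M} {u v : Fin r → ℕ}
    (h : Rrel B a u v) : Rrel (B ∘ e) a (u ∘ e) (v ∘ e) := by
  induction h with
  | refl => exact Relation.ReflTransGen.refl
  | tail _ hs ih =>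
    exact ih.tail ⟨by rw [phi_comp]; exact hs.1, by rw [phi_comp]; exact hs.2.1,
      by rw [dot_comp]; exact hs.2.2⟩

lemma isBetti_comp (e : Fin r' ≃ Fin r) {B : Fin r → M} {a : M}
    (h : IsBetti (B ∘ e) a) : IsBetti B a := by
  obtain ⟨u, v, hu, hv, hR⟩ := h
  have key : ∀ w : Fin r' → ℕ, (w ∘ e.symm) ∘ e = w := by
    intro w; funext i; simp
  refine ⟨u ∘ e.symm, v ∘ e.symm, ?_, ?_, ?_⟩
  · rw [← phi_comp e B (u ∘ e.symm), key]; exact hu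
  · rw [← phi_comp e B (v ∘ e.symm), key]; exact hv
  · intro hc
    have := rrel_comp e hc
    rw [key, key] at this
    exact hR this

lemma append_flip (A₁ : Fin r₁ → M) (A₂ : Fin r₂ → M) :
    Fin.append A₂ A₁ = Fin.append A₁ A₂ ∘ (finAddFlip : Fin (r₂ + r₁) ≃ Fin (r₁ + r₂)) := by
  funext i
  refine Fin.addCases (motive := fun i : Fin (r₂ + r₁) =>
    Fin.append A₂ A₁ i = (Fin.append A₁ A₂ ∘ finAddFlip) i) (fun j => ?_) (fun j => ?_) i <;>
    simp [finAddFlip_apply_castAdd, finAddFlip_apply_natAdd]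

lemma isBetti_flip {A₁ : Fin r₁ → M} {A₂ : Fin r₂ → M} {a : M}
    (h : IsBetti (Fin.append A₂ A₁) a) : IsBetti (Fin.append A₁ A₂) a := by
  rw [append_flip] at h
  exact isBetti_comp _ h

end EquivTransport

end Append

section Core

variable {n r₁ r₂ : ℕ} {A₁ : Fin r₁ → (Fin n → ℤ)} {A₂ : Fin r₂ → (Fin n → ℤ)}
  {d : Fin n → ℤ} {δ₁ : Fin r₁ → ℕ} {δ₂ : Fin r₂ → ℕ} {a : Fin n → ℤ}

lemma range_append (A₁ : Fin r₁ → M) (A₂ : Fin r₂ → M) :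
    Set.range (Fin.append A₁ A₂) = Set.range A₁ ∪ Set.range A₂ := by
  ext x
  constructor
  · rintro ⟨i, rfl⟩
    refine Fin.addCases (motive := fun i => Fin.append A₁ A₂ i ∈ Set.range A₁ ∪ Set.range A₂)
      (fun j => ?_) (fun j => ?_) i
    · exact Or.inl ⟨j, by simp⟩
    · exact Or.inr ⟨j, by simp⟩
  · rintro (⟨j, rfl⟩ | ⟨j, rfl⟩)
    · exact ⟨Fin.castAdd _ j, by simp⟩
    · exact ⟨Fin.natAdd _ j, by simp⟩

lemma mem_S_left (u : Fin r₁ → ℕ) :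
    phi A₁ u ∈ AddSubmonoid.closure (Set.range A₁ ∪ Set.range A₂) :=
  AddSubmonoid.closure_mono Set.subset_union_left (phi_mem_closure A₁ u)

lemma mem_S_right (u : Fin r₂ → ℕ) :
    phi A₂ u ∈ AddSubmonoid.closure (Set.range A₁ ∪ Set.range A₂) :=
  AddSubmonoid.closure_mono Set.subset_union_right (phi_mem_closure A₂ u)

lemma zsmul_eq_zero_left {z : ℤ} (hd0 : d ≠ 0) (hz : z • d = 0) : z = 0 := by
  by_contra h
  apply hd0
  funext i
  have := congrFun hz i
  simp only [Pi.smul_apply, smul_eq_mul, Pi.zero_apply] at this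
  rcases mul_eq_zero.1 this with h' | h'
  · exact absurd h' h
  · exact h'

section Red

variable (hred : ∀ x ∈ AddSubmonoid.closure (Set.range A₁ ∪ Set.range A₂),
      -x ∈ AddSubmonoid.closure (Set.range A₁ ∪ Set.range A₂) → x = 0)

include hred in
lemma phi_left_ne_zero (hA₁ : ∀ i, A₁ i ≠ 0) {u : Fin r₁ → ℕ} (hu : u ≠ 0) :
    phi A₁ u ≠ 0 := by
  have : ∃ j, u j ≠ 0 := by
    by_contra hc; push_neg at hc; exact hu (funext fun i => hc i)
  obtain ⟨j, hj⟩ := this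
  intro h0
  rw [phi_decomp A₁ hj] at h0
  refine hA₁ j (hred (A₁ j) ?_ ?_)
  · exact AddSubmonoid.subset_closure (Or.inl ⟨j, rfl⟩)
  · rw [neg_eq_of_add_eq_zero_right h0]
    exact mem_S_left _

include hred in
lemma phi_right_ne_zero (hA₂ : ∀ i, A₂ i ≠ 0) {u : Fin r₂ → ℕ} (hu : u ≠ 0) :
    phi A₂ u ≠ 0 := by
  have : ∃ j, u j ≠ 0 := by
    by_contra hc; push_neg at hc; exact hu (funext fun i => hc i)
  obtain ⟨j, hj⟩ := this
  intro h0
  rw [phi_decomp A₂ hj] at h0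
  refine hA₂ j (hred (A₂ j) ?_ ?_)
  · exact AddSubmonoid.subset_closure (Or.inr ⟨j, rfl⟩)
  · rw [neg_eq_of_add_eq_zero_right h0]
    exact mem_S_right _

include hred in
lemma knn (hd0 : d ≠ 0) (hdS : d ∈ AddSubmonoid.closure (Set.range A₁ ∪ Set.range A₂))
    {x : Fin n → ℤ} (hx : x ∈ AddSubmonoid.closure (Set.range A₁ ∪ Set.range A₂))
    {z : ℤ} (hz : z • d = x) : 0 ≤ z := by
  by_contra h
  push_neg at h
  have hnx : -x ∈ AddSubmonoid.closure (Set.range A₁ ∪ Set.range A₂) := by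
    have : -x = ((-z).toNat : ℕ) • d := by
      rw [← natCast_zsmul, Int.toNat_of_nonneg (by omega), ← hz, neg_zsmul]
    rw [this]
    exact nsmul_mem hdS _
  have : x = 0 := hred x hx hnx
  rw [this] at hz
  have := zsmul_eq_zero_left hd0 hz
  omega

variable (hglue : AddSubgroup.closure (Set.range A₁) ⊓ AddSubgroup.closure (Set.range A₂)
      = AddSubgroup.zmultiples d) (hd0 : d ≠ 0) (hδ₁ : phi A₁ δ₁ = d) (hδ₂ : phi A₂ δ₂ = d)

include hred hglue hd0 hδ₁ in
lemma exists_k {w₁ : Fin r₁ → ℕ} {w₂ : Fin r₂ → ℕ}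
    (ha : a ∈ AddSubgroup.closure (Set.range A₁)) (hw : phi A₁ w₁ + phi A₂ w₂ = a) :
    ∃ k : ℕ, phi A₂ w₂ = k • d := by
  have h2 : phi A₂ w₂ ∈ AddSubgroup.closure (Set.range A₂) := phi_mem_subgroup A₂ w₂
  have h1 : phi A₂ w₂ ∈ AddSubgroup.closure (Set.range A₁) := by
    have heq : phi A₂ w₂ = a - phi A₁ w₁ := by rw [← hw]; abel
    rw [heq]
    exact sub_mem ha (phi_mem_subgroup A₁ w₁)
  have hmem : phi A₂ w₂ ∈ AddSubgroup.zmultiples d := by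
    rw [← hglue]; exact ⟨h1, h2⟩
  obtain ⟨z, hz⟩ := AddSubgroup.mem_zmultiples_iff.1 hmem
  have hdS : d ∈ AddSubmonoid.closure (Set.range A₁ ∪ Set.range A₂) := hδ₁ ▸ mem_S_left δ₁
  have hz0 : 0 ≤ z := knn hred hd0 hdS (mem_S_right w₂) hz
  refine ⟨z.toNat, ?_⟩
  rw [← hz, ← natCast_zsmul, Int.toNat_of_nonneg hz0]

end Red

end Core

section MainLemmas

variable {n r₁ r₂ : ℕ} {A₁ : Fin r₁ → (Fin n → ℤ)} {A₂ : Fin r₂ → (Fin n → ℤ)}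
  {d : Fin n → ℤ} {δ₁ : Fin r₁ → ℕ} {δ₂ : Fin r₂ → ℕ} {a : Fin n → ℤ}
  (hd0 : d ≠ 0) (hδ₁ : phi A₁ δ₁ = d) (hδ₂ : phi A₂ δ₂ = d)
  (hA₁ : ∀ i, A₁ i ≠ 0) (hA₂ : ∀ i, A₂ i ≠ 0)
  (hred : ∀ x ∈ AddSubmonoid.closure (Set.range A₁ ∪ Set.range A₂),
      -x ∈ AddSubmonoid.closure (Set.range A₁ ∪ Set.range A₂) → x = 0)
  (hglue : AddSubgroup.closure (Set.range A₁) ⊓ AddSubgroup.closure (Set.range A₂)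
      = AddSubgroup.zmultiples d)

include hd0 hδ₁ hδ₂ hA₁ hA₂ hred hglue in
lemma betti_d : IsBetti (Fin.append A₁ A₂) d := by
  have hδ₂0 : δ₂ ≠ 0 := fun h0 => hd0 (by rw [← hδ₂, h0, phi_zero])
  refine ⟨Fin.append δ₁ 0, Fin.append 0 δ₂,
    by rw [phi_append, phi_zero, add_zero, hδ₁],
    by rw [phi_append, phi_zero, zero_add, hδ₂], ?_⟩
  intro h
  have hdG : d ∈ AddSubgroup.closure (Set.range A₁) := hδ₁ ▸ phi_mem_subgroup A₁ δ₁
  have inv : ∀ w, Rrel (Fin.append A₁ A₂) d (Fin.append δ₁ 0) w →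
      (fun i => w (Fin.natAdd r₁ i)) = 0 := by
    intro w h
    induction h with
    | refl => funext i; simp
    | @tail b c h₁ hs ih =>
      let b₁ : Fin r₁ → ℕ := fun i => b (Fin.castAdd r₂ i)
      let b₂ : Fin r₂ → ℕ := fun i => b (Fin.natAdd r₁ i)
      have hb : Fin.append b₁ b₂ = b := append_decomp b
      have hb₂ : b₂ = 0 := ih
      let c₁ : Fin r₁ → ℕ := fun i => c (Fin.castAdd r₂ i)
      let c₂ : Fin r₂ → ℕ := fun i => c (Fin.natAdd r₁ i)
      have hc : Fin.append c₁ c₂ = c := append_decomp c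
      obtain ⟨hbd, hcd, hdot⟩ := hs
      rw [← hb, ← hc, dot_append] at hdot
      rw [hb₂] at hdot
      simp only [Pi.zero_apply, zero_mul, Finset.sum_const_zero, add_zero] at hdot
      obtain ⟨i, hb1i, hc1i⟩ := dot_ne_zero_elim hdot
      have hc₁ : c₁ ≠ 0 := fun h0 => hc1i (by rw [h0]; rfl)
      have hcphi : phi A₁ c₁ + phi A₂ c₂ = d := by rw [← phi_append, hc]; exact hcd
      obtain ⟨k, hk⟩ := exists_k hred hglue hd0 hδ₁ hdG hcphi
      have hphic₁ : phi A₁ c₁ = (1 - (k : ℤ)) • d := by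
        have : phi A₁ c₁ = d - (k : ℤ) • d := by
          rw [natCast_zsmul, ← hk]
          rw [← hcphi]; abel
        rw [this, sub_smul, one_smul]
      have hdS : d ∈ AddSubmonoid.closure (Set.range A₁ ∪ Set.range A₂) := hδ₁ ▸ mem_S_left δ₁
      have h1k : 0 ≤ 1 - (k : ℤ) := knn hred hd0 hdS (mem_S_left c₁) hphic₁.symm
      have hne : phi A₁ c₁ ≠ 0 := phi_left_ne_zero hred hA₁ hc₁
      have hk0 : k = 0 := by
        by_contra hkne
        have hk1 : (1 : ℤ) ≤ (k : ℤ) := by exact_mod_cast Nat.one_le_iff_ne_zero.2 hkne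
        have : (1 - (k : ℤ)) = 0 := by omega
        rw [this, zero_smul] at hphic₁
        exact hne hphic₁
      rw [hk0] at hk
      simp only [zero_smul] at hk
      have : c₂ = 0 := by
        by_contra hc2
        exact phi_right_ne_zero hred hA₂ hc2 hk
      exact this
  have := inv _ h
  apply hδ₂0
  funext i
  have := congrFun this i
  simpa using this

include hd0 hδ₁ hA₁ hA₂ hred hglue in
lemma betti_left (hb : IsBetti A₁ a) : IsBetti (Fin.append A₁ A₂) a := by
  obtain ⟨u₁, v₁, hu, hv, hR⟩ := hb
  have haG : a ∈ AddSubgroup.closure (Set.range A₁) := hu ▸ phi_mem_subgroup A₁ u₁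
  have hδ₁0 : δ₁ ≠ 0 := fun h0 => hd0 (by rw [← hδ₁, h0, phi_zero])
  refine ⟨Fin.append u₁ 0, Fin.append v₁ 0,
    by rw [phi_append, phi_zero, add_zero, hu],
    by rw [phi_append, phi_zero, add_zero, hv], ?_⟩
  intro h
  apply hR
  have key : ∀ w, Rrel (Fin.append A₁ A₂) a (Fin.append u₁ 0) w →
      ∀ w₁ w₂, Fin.append w₁ w₂ = w → ∀ k : ℕ, phi A₂ w₂ = k • d →
      Rrel A₁ a u₁ (w₁ + k • δ₁) := by
    intro w h
    induction h with
    | refl =>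
      intro w₁ w₂ hw k hk
      obtain ⟨h1, h2⟩ := append_eq_append_iff.1 hw
      rw [h2, phi_zero] at hk
      have hk0 : k = 0 := by
        have : ((k : ℤ)) • d = 0 := by rw [natCast_zsmul, ← hk]
        have := zsmul_eq_zero_left hd0 this
        exact_mod_cast this
      rw [h1, hk0]
      simp only [zero_smul, add_zero]
      exact Relation.ReflTransGen.refl
    | @tail b c h₁ hs ih =>
      intro c₁ c₂ hc k hk
      let b₁ : Fin r₁ → ℕ := fun i => b (Fin.castAdd r₂ i)
      let b₂ : Fin r₂ → ℕ := fun i => b (Fin.natAdd r₁ i)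
      have hb : Fin.append b₁ b₂ = b := append_decomp b
      obtain ⟨hbd, hcd, hdot⟩ := hs
      have hbphi : phi A₁ b₁ + phi A₂ b₂ = a := by rw [← phi_append, hb]; exact hbd
      have hcphi : phi A₁ c₁ + phi A₂ c₂ = a := by rw [← phi_append, hc]; exact hcd
      obtain ⟨kb, hkb⟩ := exists_k hred hglue hd0 hδ₁ haG hbphi
      have ihR := ih b₁ b₂ hb kb hkb
      refine ihR.tail ⟨?_, ?_, ?_⟩
      · rw [phi_add, phi_nsmul, hδ₁, ← hkb]; exact hbphi
      · rw [phi_add, phi_nsmul, hδ₁, ← hk]; exact hcphi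
      · rw [← hb, ← hc, dot_append] at hdot
        by_cases h12 : (∑ i, b₁ i * c₁ i) ≠ 0
        · exact dot_ne_mono h12 (Pi.le_def.2 fun i => Nat.le_add_right _ _)
            (Pi.le_def.2 fun i => Nat.le_add_right _ _)
        · push_neg at h12
          have h22 : (∑ i, b₂ i * c₂ i) ≠ 0 := by
            intro h0; rw [h12, h0] at hdot; exact hdot rfl
          obtain ⟨i, hb2, hc2⟩ := dot_ne_zero_elim h22
          have hb₂ : b₂ ≠ 0 := fun h0 => hb2 (by rw [h0]; rfl)
          have hc₂ : c₂ ≠ 0 := fun h0 => hc2 (by rw [h0]; rfl)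
          have hkb1 : 1 ≤ kb := by
            rcases Nat.eq_zero_or_pos kb with h0 | h0
            · exfalso; rw [h0, zero_smul] at hkb
              exact phi_right_ne_zero hred hA₂ hb₂ hkb
            · exact h0
          have hk1 : 1 ≤ k := by
            rcases Nat.eq_zero_or_pos k with h0 | h0
            · exfalso; rw [h0, zero_smul] at hk
              exact phi_right_ne_zero hred hA₂ hc₂ hk
            · exact h0
          refine dot_ne_mono (self_dot_ne_zero hδ₁0) (Pi.le_def.2 fun i => ?_)
            (Pi.le_def.2 fun i => ?_)
          · have : (kb • δ₁) i = kb * δ₁ i := rfl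
            simp only [Pi.add_apply, this]
            calc δ₁ i ≤ kb * δ₁ i := Nat.le_mul_of_pos_left _ hkb1
            _ ≤ b₁ i + kb * δ₁ i := Nat.le_add_left _ _
          · have : (k • δ₁) i = k * δ₁ i := rfl
            simp only [Pi.add_apply, this]
            calc δ₁ i ≤ k * δ₁ i := Nat.le_mul_of_pos_left _ hk1
            _ ≤ c₁ i + k * δ₁ i := Nat.le_add_left _ _
  have := key _ h v₁ 0 rfl 0 (by simp [phi_zero])
  simpa using this

end MainLemmas

section MainLemmas2

variable {n r₁ r₂ : ℕ} {A₁ : Fin r₁ → (Fin n → ℤ)} {A₂ : Fin r₂ → (Fin n → ℤ)}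
  {d : Fin n → ℤ} {δ₁ : Fin r₁ → ℕ} {δ₂ : Fin r₂ → ℕ} {a : Fin n → ℤ}
  (hd0 : d ≠ 0) (hδ₁ : phi A₁ δ₁ = d) (hδ₂ : phi A₂ δ₂ = d)
  (hA₁ : ∀ i, A₁ i ≠ 0) (hA₂ : ∀ i, A₂ i ≠ 0)
  (hred : ∀ x ∈ AddSubmonoid.closure (Set.range A₁ ∪ Set.range A₂),
      -x ∈ AddSubmonoid.closure (Set.range A₁ ∪ Set.range A₂) → x = 0)
  (hglue : AddSubgroup.closure (Set.range A₁) ⊓ AddSubgroup.closure (Set.range A₂)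
      = AddSubgroup.zmultiples d)

include hδ₁ hδ₂ in
lemma ladder {w₁ : Fin r₁ → ℕ} (hw₁ : w₁ ≠ 0) (w₂ : Fin r₂ → ℕ) (k : ℕ)
    (ha : phi A₁ w₁ + phi A₂ w₂ + k • d = a) :
    ∀ j, j ≤ k → Rrel (Fin.append A₁ A₂) a (Fin.append w₁ (w₂ + k • δ₂))
      (Fin.append (w₁ + j • δ₁) (w₂ + (k - j) • δ₂)) := by
  have hsum : ∀ j, j ≤ k → phi (Fin.append A₁ A₂) (Fin.append (w₁ + j • δ₁) (w₂ + (k - j) • δ₂)) = a := by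
    intro j hj
    rw [phi_append, phi_add, phi_add, phi_nsmul, phi_nsmul, hδ₁, hδ₂]
    rw [show phi A₁ w₁ + j • d + (phi A₂ w₂ + (k - j) • d)
        = phi A₁ w₁ + phi A₂ w₂ + (j • d + (k - j) • d) from by abel]
    rw [← add_nsmul, show j + (k - j) = k from by omega]
    exact ha
  intro j
  induction j with
  | zero =>
    intro _
    rw [show w₁ + 0 • δ₁ = w₁ from by simp, Nat.sub_zero]
    exact Relation.ReflTransGen.refl
  | succ j ih =>
    intro hj
    refine (ih (by omega)).tail ⟨hsum j (by omega), hsum (j+1) hj, ?_⟩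
    rw [dot_append]
    have hl : (∑ i, (w₁ + j • δ₁) i * (w₁ + (j+1) • δ₁) i) ≠ 0 :=
      dot_ne_mono (self_dot_ne_zero hw₁) (Pi.le_def.2 fun i => Nat.le_add_right _ _)
        (Pi.le_def.2 fun i => Nat.le_add_right _ _)
    omega

include hδ₁ hδ₂ in
lemma ladder' (w₁ : Fin r₁ → ℕ) {w₂ : Fin r₂ → ℕ} (hw₂ : w₂ ≠ 0) (k : ℕ)
    (ha : phi A₁ w₁ + phi A₂ w₂ + k • d = a) :
    ∀ j, j ≤ k → Rrel (Fin.append A₁ A₂) a (Fin.append (w₁ + k • δ₁) w₂)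
      (Fin.append (w₁ + (k - j) • δ₁) (w₂ + j • δ₂)) := by
  have hsum : ∀ j, j ≤ k → phi (Fin.append A₁ A₂) (Fin.append (w₁ + (k - j) • δ₁) (w₂ + j • δ₂)) = a := by
    intro j hj
    rw [phi_append, phi_add, phi_add, phi_nsmul, phi_nsmul, hδ₁, hδ₂]
    rw [show phi A₁ w₁ + (k - j) • d + (phi A₂ w₂ + j • d)
        = phi A₁ w₁ + phi A₂ w₂ + ((k - j) • d + j • d) from by abel]
    rw [← add_nsmul, show (k - j) + j = k from by omega]
    exact ha
  intro j
  induction j with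
  | zero =>
    intro _
    rw [show w₂ + 0 • δ₂ = w₂ from by simp, Nat.sub_zero]
    exact Relation.ReflTransGen.refl
  | succ j ih =>
    intro hj
    refine (ih (by omega)).tail ⟨hsum j (by omega), hsum (j+1) hj, ?_⟩
    rw [dot_append]
    have hl : (∑ i, (w₂ + j • δ₂) i * (w₂ + (j+1) • δ₂) i) ≠ 0 :=
      dot_ne_mono (self_dot_ne_zero hw₂) (Pi.le_def.2 fun i => Nat.le_add_right _ _)
        (Pi.le_def.2 fun i => Nat.le_add_right _ _)
    omega

include hd0 hδ₁ hδ₂ hA₁ hA₂ hred hglue in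
lemma conn (h1 : ¬ IsBetti A₁ a) (h2 : ¬ IsBetti A₂ a) (had : a ≠ d)
    (u₁ v₁ : Fin r₁ → ℕ) (u₂ v₂ : Fin r₂ → ℕ) (k : ℕ)
    (hu : phi A₁ u₁ + phi A₂ u₂ = a) (hv : phi A₁ v₁ + phi A₂ v₂ = a)
    (hk : phi A₂ v₂ = phi A₂ u₂ + k • d) :
    Rrel (Fin.append A₁ A₂) a (Fin.append u₁ u₂) (Fin.append v₁ v₂) := by
  have hδ₁0 : δ₁ ≠ 0 := fun h0 => hd0 (by rw [← hδ₁, h0, phi_zero])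
  have hδ₂0 : δ₂ ≠ 0 := fun h0 => hd0 (by rw [← hδ₂, h0, phi_zero])
  have hk' : phi A₁ u₁ = phi A₁ v₁ + k • d := by
    have h := hu.trans hv.symm
    rw [hk] at h
    have h' : phi A₁ u₁ + phi A₂ u₂ = (phi A₁ v₁ + k • d) + phi A₂ u₂ := by
      rw [h]; abel
    exact add_right_cancel h'
  have hphiu : phi (Fin.append A₁ A₂) (Fin.append u₁ u₂) = a := by rw [phi_append]; exact hu
  have hphiv : phi (Fin.append A₁ A₂) (Fin.append v₁ v₂) = a := by rw [phi_append]; exact hv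
  by_cases hv₁ : v₁ = 0
  · have hav : phi A₂ v₂ = a := by rw [hv₁, phi_zero, zero_add] at hv; exact hv
    have hud : phi A₁ u₁ = k • d := by rw [hk', hv₁, phi_zero, zero_add]
    by_cases hu₁ : u₁ = 0
    · have hau : phi A₂ u₂ = a := by rw [hu₁, phi_zero, zero_add] at hu; exact hu
      rw [hu₁, hv₁]
      exact lift_right (conn_of_not_betti h2 u₂ v₂ hau hav)
    · have hk1 : 1 ≤ k := by
        rcases Nat.eq_zero_or_pos k with h0 | h0
        · exfalso; rw [h0, zero_smul] at hud
          exact phi_left_ne_zero hred hA₁ hu₁ hud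
        · exact h0
      by_cases hu₂ : u₂ = 0
      · -- a = k • d with k ≥ 2; u is pure side-1, v pure side-2
        have hau : phi A₁ u₁ = a := by rw [hu₂, phi_zero, add_zero] at hu; exact hu
        have hakd : a = k • d := by rw [← hau, hud]
        have hk2 : 2 ≤ k := by
          rcases Nat.lt_or_ge k 2 with h0 | h0
          · interval_cases k
            exact absurd (by rw [hakd, one_smul] : a = d) had
          · exact h0
        obtain ⟨m, rfl⟩ : ∃ m, k = m + 2 := ⟨k - 2, by omega⟩
        have hphikδ₁ : phi A₁ ((m+2) • δ₁) = a := by rw [phi_nsmul, hδ₁, ← hakd]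
        have C1 : Rrel (Fin.append A₁ A₂) a (Fin.append u₁ u₂) (Fin.append ((m+2) • δ₁) 0) := by
          rw [hu₂]
          exact lift_left (conn_of_not_betti h1 _ _ hau hphikδ₁)
        have hsplit : phi A₁ (0 : Fin r₁ → ℕ) + phi A₂ δ₂ + (m+1) • d = a := by
          rw [phi_zero, zero_add, hδ₂, hakd]
          module
        have C2 : step (Fin.append A₁ A₂) a (Fin.append ((m+2) • δ₁) 0)
            (Fin.append ((0 : Fin r₁ → ℕ) + (m+1) • δ₁) δ₂) := by
          refine ⟨by rw [phi_append, phi_zero, add_zero]; exact hphikδ₁, ?_, ?_⟩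
          · rw [phi_append, phi_add, phi_zero, zero_add, phi_nsmul, hδ₁, hδ₂, hakd]
            module
          · rw [dot_append]
            have hl : (∑ i, ((m+2) • δ₁) i * ((0 : Fin r₁ → ℕ) + (m+1) • δ₁) i) ≠ 0 := by
              refine dot_ne_mono (self_dot_ne_zero hδ₁0) (Pi.le_def.2 fun i => ?_)
                (Pi.le_def.2 fun i => ?_)
              · show δ₁ i ≤ (m+2) * δ₁ i; nlinarith [δ₁ i]
              · show δ₁ i ≤ 0 + (m+1) * δ₁ i; nlinarith [δ₁ i]
            omega
        have C3 : Rrel (Fin.append A₁ A₂) a (Fin.append ((0 : Fin r₁ → ℕ) + (m+1) • δ₁) δ₂)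
            (Fin.append ((0 : Fin r₁ → ℕ) + ((m+1) - (m+1)) • δ₁) (δ₂ + (m+1) • δ₂)) :=
          ladder' hδ₁ hδ₂ 0 hδ₂0 (m+1) hsplit (m+1) le_rfl
        have e1 : Fin.append ((0 : Fin r₁ → ℕ) + ((m+1) - (m+1)) • δ₁) (δ₂ + (m+1) • δ₂)
            = Fin.append (0 : Fin r₁ → ℕ) ((m+2) • δ₂) := by
          rw [show (0 : Fin r₁ → ℕ) + ((m+1) - (m+1)) • δ₁ = 0 from by simp,
            show δ₂ + (m+1) • δ₂ = (m+2) • δ₂ from by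
              funext i
              show δ₂ i + (m+1) * δ₂ i = (m+2) * δ₂ i
              ring]
        have hphikδ₂ : phi A₂ ((m+2) • δ₂) = a := by rw [phi_nsmul, hδ₂, ← hakd]
        have C4 : Rrel (Fin.append A₁ A₂) a (Fin.append (0 : Fin r₁ → ℕ) ((m+2) • δ₂))
            (Fin.append v₁ v₂) := by
          rw [hv₁]
          exact lift_right (conn_of_not_betti h2 _ _ hphikδ₂ hav)
        exact C1.trans ((Relation.ReflTransGen.single C2).trans ((C3.trans (e1 ▸ Relation.ReflTransGen.refl)).trans C4))
      · -- u₁ ≠ 0, u₂ ≠ 0, v₁ = 0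
        have hphi2 : phi A₂ (u₂ + k • δ₂) = a := by
          rw [phi_add, phi_nsmul, hδ₂, ← hk]; exact hav
        have C1 : step (Fin.append A₁ A₂) a (Fin.append u₁ u₂) (Fin.append ((0 : Fin r₁ → ℕ) + k • δ₁) u₂) := by
          refine ⟨hphiu, ?_, ?_⟩
          · rw [phi_append, phi_add, phi_zero, zero_add, phi_nsmul, hδ₁, ← hud]; exact hu
          · rw [dot_append]
            have hr : (∑ i, u₂ i * u₂ i) ≠ 0 := self_dot_ne_zero hu₂
            omega
        have hsplit : phi A₁ (0 : Fin r₁ → ℕ) + phi A₂ u₂ + k • d = a := by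
          rw [phi_zero, zero_add, ← hud]
          rw [show phi A₂ u₂ + phi A₁ u₁ = phi A₁ u₁ + phi A₂ u₂ from by abel]
          exact hu
        have C2 : Rrel (Fin.append A₁ A₂) a (Fin.append ((0 : Fin r₁ → ℕ) + k • δ₁) u₂)
            (Fin.append ((0 : Fin r₁ → ℕ) + (k - k) • δ₁) (u₂ + k • δ₂)) :=
          ladder' hδ₁ hδ₂ 0 hu₂ k hsplit k le_rfl
        have e1 : Fin.append ((0 : Fin r₁ → ℕ) + (k - k) • δ₁) (u₂ + k • δ₂)
            = Fin.append (0 : Fin r₁ → ℕ) (u₂ + k • δ₂) := by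
          rw [show (0 : Fin r₁ → ℕ) + (k - k) • δ₁ = 0 from by simp]
        have C3 : Rrel (Fin.append A₁ A₂) a (Fin.append (0 : Fin r₁ → ℕ) (u₂ + k • δ₂))
            (Fin.append v₁ v₂) := by
          rw [hv₁]
          exact lift_right (conn_of_not_betti h2 _ _ hphi2 hav)
        exact (Relation.ReflTransGen.single C1).trans ((C2.trans (e1 ▸ Relation.ReflTransGen.refl)).trans C3)
  · by_cases hu₂ : u₂ = 0
    · have hau : phi A₁ u₁ = a := by rw [hu₂, phi_zero, add_zero] at hu; exact hu
      by_cases hv₂ : v₂ = 0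
      · have hav : phi A₁ v₁ = a := by rw [hv₂, phi_zero, add_zero] at hv; exact hv
        rw [hu₂, hv₂]
        exact lift_left (conn_of_not_betti h1 u₁ v₁ hau hav)
      · have hvd : phi A₂ v₂ = k • d := by rw [hk, hu₂, phi_zero, zero_add]
        have hk1 : 1 ≤ k := by
          rcases Nat.eq_zero_or_pos k with h0 | h0
          · exfalso; rw [h0, zero_smul] at hvd
            exact phi_right_ne_zero hred hA₂ hv₂ hvd
          · exact h0
        -- v = (v₁, v₂) ~ (v₁, 0 + k δ₂) ~ ladder ~ (v₁ + k δ₁, 0) ~ u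
        have hphikδ₂ : phi A₂ ((0 : Fin r₂ → ℕ) + k • δ₂) = k • d := by
          rw [phi_add, phi_zero, zero_add, phi_nsmul, hδ₂]
        have C1 : step (Fin.append A₁ A₂) a (Fin.append v₁ v₂)
            (Fin.append v₁ ((0 : Fin r₂ → ℕ) + k • δ₂)) := by
          refine ⟨hphiv, ?_, ?_⟩
          · rw [phi_append, hphikδ₂, ← hvd]; exact hv
          · rw [dot_append]
            have hl : (∑ i, v₁ i * v₁ i) ≠ 0 := self_dot_ne_zero hv₁
            omega
        have hsplit : phi A₁ v₁ + phi A₂ (0 : Fin r₂ → ℕ) + k • d = a := by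
          rw [phi_zero, add_zero, ← hvd]; exact hv
        have C2 : Rrel (Fin.append A₁ A₂) a (Fin.append v₁ ((0 : Fin r₂ → ℕ) + k • δ₂))
            (Fin.append (v₁ + k • δ₁) ((0 : Fin r₂ → ℕ) + (k - k) • δ₂)) :=
          ladder hδ₁ hδ₂ hv₁ 0 k hsplit k le_rfl
        have e1 : Fin.append (v₁ + k • δ₁) ((0 : Fin r₂ → ℕ) + (k - k) • δ₂)
            = Fin.append (v₁ + k • δ₁) (0 : Fin r₂ → ℕ) := by
          rw [show (0 : Fin r₂ → ℕ) + (k - k) • δ₂ = 0 from by simp]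
        have hphiv₁k : phi A₁ (v₁ + k • δ₁) = a := by
          rw [phi_add, phi_nsmul, hδ₁, ← hk']; exact hau
        have C3 : Rrel (Fin.append A₁ A₂) a (Fin.append (v₁ + k • δ₁) (0 : Fin r₂ → ℕ))
            (Fin.append u₁ u₂) := by
          rw [hu₂]
          exact lift_left (conn_of_not_betti h1 _ _ hphiv₁k hau)
        exact Rrel.symm' ((((Relation.ReflTransGen.single C1).trans (C2.trans (e1 ▸ Relation.ReflTransGen.refl))).trans C3))
    · -- v₁ ≠ 0, u₂ ≠ 0 : no Betti hypotheses needed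
      have hphi2 : phi A₂ (u₂ + k • δ₂) = phi A₂ v₂ := by
        rw [phi_add, phi_nsmul, hδ₂, ← hk]
      have C1 : step (Fin.append A₁ A₂) a (Fin.append v₁ v₂) (Fin.append v₁ (u₂ + k • δ₂)) := by
        refine ⟨hphiv, ?_, ?_⟩
        · rw [phi_append, hphi2]; exact hv
        · rw [dot_append]
          have hl : (∑ i, v₁ i * v₁ i) ≠ 0 := self_dot_ne_zero hv₁
          omega
      have hsplit : phi A₁ v₁ + phi A₂ u₂ + k • d = a := by
        rw [show phi A₁ v₁ + phi A₂ u₂ + k • d = phi A₁ v₁ + (phi A₂ u₂ + k • d) from by abel,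
          ← hk]
        exact hv
      have C2 : Rrel (Fin.append A₁ A₂) a (Fin.append v₁ (u₂ + k • δ₂))
          (Fin.append (v₁ + k • δ₁) (u₂ + (k - k) • δ₂)) :=
        ladder hδ₁ hδ₂ hv₁ u₂ k hsplit k le_rfl
      have e1 : Fin.append (v₁ + k • δ₁) (u₂ + (k - k) • δ₂) = Fin.append (v₁ + k • δ₁) u₂ := by
        rw [show u₂ + (k - k) • δ₂ = u₂ from by simp]
      have hphiv₁k : phi A₁ (v₁ + k • δ₁) = phi A₁ u₁ := by
        rw [phi_add, phi_nsmul, hδ₁, ← hk']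
      have C3 : step (Fin.append A₁ A₂) a (Fin.append (v₁ + k • δ₁) u₂) (Fin.append u₁ u₂) := by
        refine ⟨?_, hphiu, ?_⟩
        · rw [phi_append, hphiv₁k]; exact hu
        · rw [dot_append]
          have hr : (∑ i, u₂ i * u₂ i) ≠ 0 := self_dot_ne_zero hu₂
          omega
      exact Rrel.symm' ((((Relation.ReflTransGen.single C1).trans (C2.trans (e1 ▸ Relation.ReflTransGen.refl))).tail C3))

include hd0 hδ₁ hδ₂ hA₁ hA₂ hred hglue in
lemma not_betti_append (h1 : ¬ IsBetti A₁ a) (h2 : ¬ IsBetti A₂ a) (had : a ≠ d) :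
    ¬ IsBetti (Fin.append A₁ A₂) a := by
  rintro ⟨u, v, hu, hv, hR⟩
  apply hR
  let u₁ : Fin r₁ → ℕ := fun i => u (Fin.castAdd r₂ i)
  let u₂ : Fin r₂ → ℕ := fun i => u (Fin.natAdd r₁ i)
  let v₁ : Fin r₁ → ℕ := fun i => v (Fin.castAdd r₂ i)
  let v₂ : Fin r₂ → ℕ := fun i => v (Fin.natAdd r₁ i)
  have hu' : phi A₁ u₁ + phi A₂ u₂ = a := by rw [← phi_append, append_decomp u]; exact hu
  have hv' : phi A₁ v₁ + phi A₂ v₂ = a := by rw [← phi_append, append_decomp v]; exact hv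
  have hz : phi A₂ v₂ - phi A₂ u₂ ∈ AddSubgroup.zmultiples d := by
    rw [← hglue]
    refine AddSubgroup.mem_inf.2 ⟨?_, ?_⟩
    · have heq : phi A₂ v₂ - phi A₂ u₂ = phi A₁ u₁ - phi A₁ v₁ := by
        have h12 : phi A₁ u₁ + phi A₂ u₂ = phi A₁ v₁ + phi A₂ v₂ := hu'.trans hv'.symm
        linear_combination -h12
      rw [heq]
      exact sub_mem (phi_mem_subgroup A₁ u₁) (phi_mem_subgroup A₁ v₁)
    · exact sub_mem (phi_mem_subgroup A₂ v₂) (phi_mem_subgroup A₂ u₂)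
  obtain ⟨z, hzz⟩ := AddSubgroup.mem_zmultiples_iff.1 hz
  rcases le_or_gt 0 z with hz0 | hz0
  · have hk : phi A₂ v₂ = phi A₂ u₂ + z.toNat • d := by
      rw [← natCast_zsmul, Int.toNat_of_nonneg hz0, hzz]; abel
    have := conn hd0 hδ₁ hδ₂ hA₁ hA₂ hred hglue h1 h2 had u₁ v₁ u₂ v₂ z.toNat hu' hv' hk
    rwa [append_decomp u, append_decomp v] at this
  · have hk : phi A₂ u₂ = phi A₂ v₂ + (-z).toNat • d := by
      rw [← natCast_zsmul, Int.toNat_of_nonneg (by omega), neg_zsmul, hzz]; abel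
    have := conn hd0 hδ₁ hδ₂ hA₁ hA₂ hred hglue h1 h2 had v₁ u₁ v₂ u₂ (-z).toNat hv' hu' hk
    rw [append_decomp u, append_decomp v] at this
    exact Rrel.symm' this

end MainLemmas2

/-- If `S` is the gluing of `S₁` and `S₂` with `G(S₁) ∩ G(S₂) = dℤ`, then
`Betti(S) = Betti(S₁) ∪ Betti(S₂) ∪ {d}`. -/
theorem stmt7 {n r₁ r₂ : ℕ} (A₁ : Fin r₁ → (Fin n → ℤ)) (A₂ : Fin r₂ → (Fin n → ℤ))
    (hdisj : Disjoint (Set.range A₁) (Set.range A₂))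
    (hmin : ∀ i : Fin (r₁ + r₂), ¬ ∃ u : Fin (r₁ + r₂) → ℕ,
      u i = 0 ∧ phi (Fin.append A₁ A₂) u = Fin.append A₁ A₂ i)
    (hred : ∀ x ∈ AddSubmonoid.closure (Set.range (Fin.append A₁ A₂)),
      -x ∈ AddSubmonoid.closure (Set.range (Fin.append A₁ A₂)) → x = 0)
    (d : Fin n → ℤ) (hd0 : d ≠ 0)
    (hd1 : d ∈ AddSubmonoid.closure (Set.range A₁))
    (hd2 : d ∈ AddSubmonoid.closure (Set.range A₂))
    (hglue : AddSubgroup.closure (Set.range A₁) ⊓ AddSubgroup.closure (Set.range A₂)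
      = AddSubgroup.zmultiples d) :
    {s : Fin n → ℤ | IsBetti (Fin.append A₁ A₂) s}
      = {s | IsBetti A₁ s} ∪ {s | IsBetti A₂ s} ∪ {d} := by

  have hA : ∀ i : Fin (r₁ + r₂), Fin.append A₁ A₂ i ≠ 0 := by
    intro i h0
    exact hmin i ⟨0, rfl, by rw [phi_zero, h0]⟩
  have hA₁ : ∀ i, A₁ i ≠ 0 := fun i => by
    have := hA (Fin.castAdd r₂ i); rwa [Fin.append_left] at this
  have hA₂ : ∀ i, A₂ i ≠ 0 := fun i => by
    have := hA (Fin.natAdd r₁ i); rwa [Fin.append_right] at this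
  rw [range_append] at hred
  obtain ⟨δ₁, hδ₁⟩ := exists_phi_of_mem_closure hd1
  obtain ⟨δ₂, hδ₂⟩ := exists_phi_of_mem_closure hd2
  have hred_swap : ∀ x ∈ AddSubmonoid.closure (Set.range A₂ ∪ Set.range A₁),
      -x ∈ AddSubmonoid.closure (Set.range A₂ ∪ Set.range A₁) → x = 0 := by
    rw [Set.union_comm]; exact hred
  have hglue_swap : AddSubgroup.closure (Set.range A₂) ⊓ AddSubgroup.closure (Set.range A₁)
      = AddSubgroup.zmultiples d := by rw [inf_comm]; exact hglue
  ext s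
  simp only [Set.mem_setOf_eq, Set.mem_union, Set.mem_singleton_iff]
  constructor
  · intro hs
    by_contra hc
    push_neg at hc
    exact not_betti_append hd0 hδ₁ hδ₂ hA₁ hA₂ hred hglue hc.1.1 hc.1.2 hc.2 hs
  · rintro ((h | h) | h)
    · exact betti_left hd0 hδ₁ hA₁ hA₂ hred hglue h
    · exact isBetti_flip (betti_left hd0 hδ₂ hA₂ hA₁ hred_swap hglue_swap h)
    · rw [h]
      exact betti_d hd0 hδ₁ hδ₂ hA₁ hA₂ hred hglue
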